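/- Hermite addition theorem: for any m ≥ 1, real numbers α_1,…,α_m not all zero, real x_1,…,x_m, and any n ≥ 0, ∑ over (n_1,…,n_m) with n_1+⋯+n_m = n of (α_1^{n_1}⋯α_m^{n_m}/(n_1!⋯n_m!)) H_{n_1}(x_1)⋯H_{n_m}(x_m) = (|α|^n / n!) H_n(α·x / |α|), where |α| = √(α_1²+⋯+α_m²) and α·x = α_1x_1+⋯+α_mx_m. -/

import Mathlib

open Finset

/-- Physicists' Hermite polynomial. -/
noncomputable def hermiteP (n : ℕ) (x : ℝ) : ℝ :=
  (Nat.factorial n) * ∑ j ∈ Finset.range (n / 2 + 1),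
    (-1 : ℝ) ^ j * (2 * x) ^ (n - 2 * j) /
      ((Nat.factorial j) * (Nat.factorial (n - 2 * j)))

lemma hermiteP_zero (x : ℝ) : hermiteP 0 x = 1 := by simp [hermiteP]
lemma hermiteP_one (x : ℝ) : hermiteP 1 x = 2 * x := by simp [hermiteP]

lemma hermiteP_succ_succ (n : ℕ) (x : ℝ) :
    hermiteP (n + 2) x = 2 * x * hermiteP (n + 1) x - 2 * (n + 1) * hermiteP n x := by
  have hdiv2 : (n + 2) / 2 + 1 = n / 2 + 2 := by omega
  set R' : ℕ → ℝ := fun j => (-1 : ℝ) ^ j * (2 * x) ^ (n + 2 - 2 * j) *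
      ((Nat.factorial (n+1) : ℝ) * (n + 2 - 2 * j : ℕ)) /
      ((Nat.factorial j) * (Nat.factorial (n + 2 - 2 * j))) with hR'
  set P : ℕ → ℝ := fun j => (-1 : ℝ) ^ j * (2 * x) ^ (n + 2 - 2 * j) *
      ((Nat.factorial (n+1) : ℝ) * (2 * j)) /
      ((Nat.factorial j) * (Nat.factorial (n + 2 - 2 * j))) with hP
  have hLHS : hermiteP (n + 2) x = ∑ j ∈ Finset.range (n / 2 + 2), (R' j + P j) := by
    rw [hermiteP, hdiv2, Finset.mul_sum]
    refine Finset.sum_congr rfl fun j hj => ?_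
    rw [Finset.mem_range] at hj
    have h2j : 2 * j ≤ n + 2 := by omega
    simp only [hR', hP]
    have hfac : (Nat.factorial (n+2) : ℝ) = ((n:ℝ)+2) * Nat.factorial (n+1) := by
      rw [Nat.factorial_succ]; push_cast; ring
    have hcast : ((n + 2 - 2 * j : ℕ) : ℝ) = (n : ℝ) + 2 - 2 * j := by
      rw [Nat.cast_sub h2j]; push_cast; ring
    rw [hfac, hcast, ← add_div]
    push_cast
    ring
  have hRsum : ∑ j ∈ Finset.range (n / 2 + 2), R' j = 2 * x * hermiteP (n+1) x := by
    rw [hermiteP, Finset.mul_sum, Finset.mul_sum]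
    rw [← Finset.sum_subset (Finset.range_subset_range.2 (by omega : (n+1)/2 + 1 ≤ n/2 + 2))]
    · refine Finset.sum_congr rfl fun j hj => ?_
      rw [Finset.mem_range] at hj
      have h2j : 2 * j ≤ n + 1 := by omega
      have e1 : n + 2 - 2 * j = (n + 1 - 2 * j) + 1 := by omega
      simp only [hR', e1]
      generalize n + 1 - 2 * j = k
      have hfj : ((Nat.factorial j : ℝ)) ≠ 0 := by positivity
      have hfk : ((Nat.factorial k : ℝ)) ≠ 0 := by positivity
      have hk1 : ((k:ℝ) + 1) ≠ 0 := by positivity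
      have hfac : (Nat.factorial (k+1) : ℝ) = ((k:ℝ)+1) * Nat.factorial k := by
        rw [Nat.factorial_succ]; push_cast; ring
      rw [hfac, pow_succ]
      push_cast
      field_simp
    · intro j hj hj'
      rw [Finset.mem_range] at hj
      rw [Finset.mem_range, not_lt] at hj'
      have h0 : n + 2 - 2 * j = 0 := by omega
      simp only [hR', h0]
      simp
  have hPsum : ∑ j ∈ Finset.range (n / 2 + 2), P j = -2 * (n+1) * hermiteP n x := by
    have h0 : P 0 = 0 := by simp only [hP]; simp
    rw [Finset.sum_range_succ', h0, add_zero, hermiteP, Finset.mul_sum, Finset.mul_sum]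
    refine Finset.sum_congr rfl fun j hj => ?_
    rw [Finset.mem_range] at hj
    have h2j : 2 * j ≤ n := by omega
    have e1 : n + 2 - 2 * (j + 1) = n - 2 * j := by omega
    simp only [hP, e1]
    generalize n - 2 * j = k
    have hfj : ((Nat.factorial j : ℝ)) ≠ 0 := by positivity
    have hfk : ((Nat.factorial k : ℝ)) ≠ 0 := by positivity
    have hj1 : ((j:ℝ) + 1) ≠ 0 := by positivity
    have hfac : (Nat.factorial (j+1) : ℝ) = ((j:ℝ)+1) * Nat.factorial j := by
      rw [Nat.factorial_succ]; push_cast; ring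
    have hfacn : (Nat.factorial (n+1) : ℝ) = ((n:ℝ)+1) * Nat.factorial n := by
      rw [Nat.factorial_succ]; push_cast; ring
    rw [hfac, hfacn]
    push_cast
    field_simp
    ring
  rw [hLHS, Finset.sum_add_distrib, hRsum, hPsum]
  ring

noncomputable def FF (A u : ℝ) (a : ℕ) : ℝ := A ^ a * hermiteP a u

lemma FF_zero (A u : ℝ) : FF A u 0 = 1 := by simp [FF, hermiteP_zero]

lemma FF_rec (A u : ℝ) (a : ℕ) :
    FF A u (a + 1) = 2 * A * u * FF A u a - 2 * a * A ^ 2 * FF A u (a - 1) := by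
  cases a with
  | zero => simp [FF, hermiteP_zero, hermiteP_one]; ring
  | succ a =>
    simp only [FF, hermiteP_succ_succ, Nat.add_sub_cancel]
    push_cast
    ring

noncomputable def Saux (A B u v : ℝ) (n : ℕ) : ℝ :=
  ∑ a ∈ Finset.range (n + 1), ((n.choose a : ℕ) : ℝ) * FF A u a * FF B v (n - a)

lemma nat_id1 (n a : ℕ) (ha : a ≤ n) :
    (n + 1 - a) * (n + 1).choose a = (n + 1) * n.choose a := by
  have h1 : (n + 1).choose a = (n + 1).choose (n + 1 - a) := by
    rw [Nat.choose_symm (by omega)]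
  have hb : n + 1 - a = (n - a) + 1 := by omega
  have h2 := Nat.add_one_mul_choose_eq n (n - a)
  rw [h1, hb, mul_comm]
  rw [← h2, Nat.choose_symm ha]

lemma nat_id2 (n a : ℕ) :
    (a + 1) * (n + 1).choose (a + 1) = (n + 1) * n.choose a := by
  have h2 := Nat.add_one_mul_choose_eq n a
  rw [mul_comm, ← h2]

lemma Sstep (A B u v : ℝ) (n : ℕ) :
    Saux A B u v (n + 2) = 2 * (A * u + B * v) * Saux A B u v (n + 1)
      - 2 * (n + 1) * (A ^ 2 + B ^ 2) * Saux A B u v n := by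
  have hsplit : Saux A B u v (n + 2)
      = (∑ a ∈ range (n + 2), ((n + 1).choose a : ℝ) * FF A u (a + 1) * FF B v (n + 1 - a))
      + ((∑ a ∈ range (n + 2), ((n + 1).choose (a + 1) : ℝ) * FF A u (a + 1) * FF B v (n + 1 - a))
          + FF B v (n + 2)) := by
    rw [Saux, Finset.sum_range_succ']
    have h0 : ((n + 2).choose 0 : ℝ) * FF A u 0 * FF B v (n + 2 - 0) = FF B v (n + 2) := by
      simp [FF_zero]
    rw [h0]
    have hc : ∀ a ∈ range (n + 2), ((n + 2).choose (a + 1) : ℝ) * FF A u (a + 1) * FF B v (n + 2 - (a + 1))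
        = ((n + 1).choose a : ℝ) * FF A u (a + 1) * FF B v (n + 1 - a)
          + ((n + 1).choose (a + 1) : ℝ) * FF A u (a + 1) * FF B v (n + 1 - a) := by
      intro a ha
      have hcc : (n + 2).choose (a + 1) = (n + 1).choose a + (n + 1).choose (a + 1) :=
        Nat.choose_succ_succ (n + 1) a
      have he : n + 2 - (a + 1) = n + 1 - a := by omega
      rw [he, hcc]
      push_cast
      ring
    rw [Finset.sum_congr rfl hc, Finset.sum_add_distrib]
    ring
  -- piece T2 + G(n+2)
  have hT2 : (∑ a ∈ range (n + 2), ((n + 1).choose (a + 1) : ℝ) * FF A u (a + 1) * FF B v (n + 1 - a))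
      + FF B v (n + 2)
      = ∑ a ∈ range (n + 2), ((n + 1).choose a : ℝ) * FF A u a * FF B v (n + 2 - a) := by
    have h1 : ∑ a ∈ range (n + 3), ((n + 1).choose a : ℝ) * FF A u a * FF B v (n + 2 - a)
        = (∑ a ∈ range (n + 2), ((n + 1).choose (a + 1) : ℝ) * FF A u (a + 1) * FF B v (n + 1 - a))
          + FF B v (n + 2) := by
      rw [Finset.sum_range_succ']
      congr 1
      · refine Finset.sum_congr rfl fun a ha => ?_
        have he : n + 2 - (a + 1) = n + 1 - a := by omega
        rw [he]
      · simp [FF_zero]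
    have h2 : ∑ a ∈ range (n + 3), ((n + 1).choose a : ℝ) * FF A u a * FF B v (n + 2 - a)
        = ∑ a ∈ range (n + 2), ((n + 1).choose a : ℝ) * FF A u a * FF B v (n + 2 - a) := by
      rw [Finset.sum_range_succ]
      simp [Nat.choose_succ_self]
    rw [← h1, h2]
  -- expand T3 with G-recurrence
  have hT3 : ∑ a ∈ range (n + 2), ((n + 1).choose a : ℝ) * FF A u a * FF B v (n + 2 - a)
      = 2 * B * v * Saux A B u v (n + 1) - 2 * B ^ 2 * ((n + 1) * Saux A B u v n) := by
    have hexp : ∀ a ∈ range (n + 2), ((n + 1).choose a : ℝ) * FF A u a * FF B v (n + 2 - a)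
        = 2 * B * v * (((n + 1).choose a : ℝ) * FF A u a * FF B v (n + 1 - a))
          - 2 * B ^ 2 * ((((n + 1 - a) * (n + 1).choose a : ℕ) : ℝ) * FF A u a * FF B v (n - a)) := by
      intro a ha
      rw [Finset.mem_range] at ha
      have he : n + 2 - a = (n + 1 - a) + 1 := by omega
      have he2 : n + 1 - a - 1 = n - a := by omega
      rw [he, FF_rec, he2]
      push_cast
      ring
    rw [Finset.sum_congr rfl hexp, Finset.sum_sub_distrib]
    congr 1
    · rw [Saux, Finset.mul_sum]
    · -- ∑ (n+1-a)C(n+1,a) F a G(n-a) = (n+1) * S n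
      rw [Finset.sum_range_succ]
      have hlast : (((n + 1 - (n+1)) * (n + 1).choose (n+1) : ℕ) : ℝ) * FF A u (n+1) * FF B v (n - (n+1)) = 0 := by
        simp
      rw [hlast, mul_zero, add_zero, Saux, Finset.mul_sum, Finset.mul_sum]
      refine Finset.sum_congr rfl fun a ha => ?_
      rw [Finset.mem_range] at ha
      rw [nat_id1 n a (by omega)]
      push_cast
      ring
  -- expand T1 with F-recurrence
  have hT1 : ∑ a ∈ range (n + 2), ((n + 1).choose a : ℝ) * FF A u (a + 1) * FF B v (n + 1 - a)
      = 2 * A * u * Saux A B u v (n + 1) - 2 * A ^ 2 * ((n + 1) * Saux A B u v n) := by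
    have hexp : ∀ a ∈ range (n + 2), ((n + 1).choose a : ℝ) * FF A u (a + 1) * FF B v (n + 1 - a)
        = 2 * A * u * (((n + 1).choose a : ℝ) * FF A u a * FF B v (n + 1 - a))
          - 2 * A ^ 2 * (((a * (n + 1).choose a : ℕ) : ℝ) * FF A u (a - 1) * FF B v (n + 1 - a)) := by
      intro a ha
      rw [FF_rec]
      push_cast
      ring
    rw [Finset.sum_congr rfl hexp, Finset.sum_sub_distrib]
    congr 1
    · rw [Saux, Finset.mul_sum]
    · rw [Finset.sum_range_succ']
      have h0 : (((0 : ℕ) * (n + 1).choose 0 : ℕ) : ℝ) * FF A u (0 - 1) * FF B v (n + 1 - 0) = 0 := by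
        simp
      rw [h0, mul_zero, add_zero, Saux, Finset.mul_sum, Finset.mul_sum]
      refine Finset.sum_congr rfl fun a ha => ?_
      rw [Finset.mem_range] at ha
      have he : n + 1 - (a + 1) = n - a := by omega
      rw [he, Nat.add_sub_cancel, nat_id2 n a]
      push_cast
      ring
  rw [hsplit, hT2, hT3, hT1]
  ring

lemma key (A B u v : ℝ) (n : ℕ) :
    Saux A B u v n = (Real.sqrt (A ^ 2 + B ^ 2)) ^ n
      * hermiteP n ((A * u + B * v) / Real.sqrt (A ^ 2 + B ^ 2)) := by
  rcases eq_or_ne (Real.sqrt (A ^ 2 + B ^ 2)) 0 with hC | hC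
  · have hAB : A = 0 ∧ B = 0 := by
      have h0 : A ^ 2 + B ^ 2 ≤ 0 := Real.sqrt_eq_zero'.mp hC
      constructor <;> nlinarith [sq_nonneg A, sq_nonneg B]
    obtain ⟨hA, hB⟩ := hAB
    rw [hC]
    cases n with
    | zero => simp [Saux, FF, hermiteP_zero]
    | succ n =>
      rw [zero_pow (Nat.succ_ne_zero n), zero_mul]
      rw [Saux]
      refine Finset.sum_eq_zero fun a ha => ?_
      rw [Finset.mem_range] at ha
      rcases Nat.eq_zero_or_pos a with h | h
      · subst h
        have : n + 1 - 0 = n + 1 := rfl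
        simp [FF, hB]
      · simp [FF, hA, zero_pow (by omega : a ≠ 0)]
  · set C := Real.sqrt (A ^ 2 + B ^ 2) with hCdef
    have hC2 : C ^ 2 = A ^ 2 + B ^ 2 := Real.sq_sqrt (by positivity)
    set z := (A * u + B * v) / C with hz
    have hzC : A * u + B * v = C * z := by rw [hz]; field_simp
    induction n using Nat.strong_induction_on with
    | _ n ih =>
      match n with
      | 0 => simp [Saux, FF, hermiteP_zero]
      | 1 =>
        have : Saux A B u v 1 = 2 * (A * u + B * v) := by
          rw [Saux]
          rw [Finset.sum_range_succ, Finset.sum_range_one]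
          simp [FF, hermiteP_zero, hermiteP_one]
          ring
        rw [this, hermiteP_one, hzC, pow_one]
        ring
      | (n + 2) =>
        rw [Sstep, ih (n + 1) (by omega), ih n (by omega), hermiteP_succ_succ, hzC, ← hC2]
        ring

lemma biv (A B u v : ℝ) (n : ℕ) :
    ∑ p ∈ Finset.HasAntidiagonal.antidiagonal n,
        (A ^ p.1 / (Nat.factorial p.1 : ℝ) * hermiteP p.1 u)
          * (B ^ p.2 / (Nat.factorial p.2 : ℝ) * hermiteP p.2 v)
      = (Real.sqrt (A ^ 2 + B ^ 2)) ^ n / (Nat.factorial n : ℝ)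
          * hermiteP n ((A * u + B * v) / Real.sqrt (A ^ 2 + B ^ 2)) := by
  have hkey := key A B u v n
  have hL : ∑ p ∈ Finset.HasAntidiagonal.antidiagonal n,
        (A ^ p.1 / (Nat.factorial p.1 : ℝ) * hermiteP p.1 u)
          * (B ^ p.2 / (Nat.factorial p.2 : ℝ) * hermiteP p.2 v)
      = Saux A B u v n / (Nat.factorial n : ℝ) := by
    rw [Saux, Finset.sum_div, Finset.Nat.sum_antidiagonal_eq_sum_range_succ_mk]
    refine Finset.sum_congr rfl fun a ha => ?_
    rw [Finset.mem_range] at ha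
    have hle : a ≤ n := by omega
    have hch : ((n.choose a : ℕ) : ℝ) = (Nat.factorial n : ℝ) /
        ((Nat.factorial a : ℝ) * (Nat.factorial (n - a) : ℝ)) := by
      rw [Nat.cast_choose ℝ hle]
    have h1 : ((Nat.factorial a : ℝ)) ≠ 0 := by positivity
    have h2 : ((Nat.factorial (n - a) : ℝ)) ≠ 0 := by positivity
    have h3 : ((Nat.factorial n : ℝ)) ≠ 0 := by positivity
    rw [FF, FF, hch]
    field_simp
  rw [hL, hkey]
  ring

lemma multi {ι : Type*} [DecidableEq ι] (s : Finset ι) (α x : ι → ℝ) (n : ℕ) :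
    ∑ f ∈ s.piAntidiag n,
        (∏ i ∈ s, α i ^ f i / (Nat.factorial (f i) : ℝ)) * ∏ i ∈ s, hermiteP (f i) (x i)
      = (Real.sqrt (∑ i ∈ s, α i ^ 2)) ^ n / (Nat.factorial n : ℝ) *
          hermiteP n ((∑ i ∈ s, α i * x i) / Real.sqrt (∑ i ∈ s, α i ^ 2)) := by
  induction s using Finset.cons_induction generalizing n with
  | empty =>
    cases n with
    | zero => simp [hermiteP_zero]
    | succ n =>
      rw [Finset.piAntidiag_empty_of_ne_zero (Nat.succ_ne_zero n)]
      simp [Real.sqrt_zero, zero_pow (Nat.succ_ne_zero n)]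
  | cons i s hi ih =>
    rw [Finset.piAntidiag_cons hi, Finset.sum_disjiUnion]
    have hinner : ∀ p ∈ Finset.HasAntidiagonal.antidiagonal n,
        (∑ f ∈ (s.piAntidiag p.2).map
            (addRightEmbedding fun t => if t = i then p.1 else 0),
          (∏ j ∈ Finset.cons i s hi, α j ^ f j / (Nat.factorial (f j) : ℝ))
            * ∏ j ∈ Finset.cons i s hi, hermiteP (f j) (x j))
        = (α i ^ p.1 / (Nat.factorial p.1 : ℝ) * hermiteP p.1 (x i))
            * ((Real.sqrt (∑ j ∈ s, α j ^ 2)) ^ p.2 / (Nat.factorial p.2 : ℝ) *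
              hermiteP p.2 ((∑ j ∈ s, α j * x j) / Real.sqrt (∑ j ∈ s, α j ^ 2))) := by
      intro p hp
      rw [Finset.sum_map]
      have hterm : ∀ g ∈ s.piAntidiag p.2,
          (∏ j ∈ Finset.cons i s hi,
              α j ^ ((addRightEmbedding fun t => if t = i then p.1 else 0) g j)
                / (Nat.factorial ((addRightEmbedding fun t => if t = i then p.1 else 0) g j) : ℝ))
            * ∏ j ∈ Finset.cons i s hi,
              hermiteP ((addRightEmbedding fun t => if t = i then p.1 else 0) g j) (x j)
          = (α i ^ p.1 / (Nat.factorial p.1 : ℝ) * hermiteP p.1 (x i))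
              * ((∏ j ∈ s, α j ^ g j / (Nat.factorial (g j) : ℝ))
                * ∏ j ∈ s, hermiteP (g j) (x j)) := by
        intro g hg
        have hgi : g i = 0 := by
          by_contra h
          exact hi ((Finset.mem_piAntidiag.mp hg).2 i h)
        have happ : ∀ j, ((addRightEmbedding fun t => if t = i then p.1 else 0) g) j
            = g j + (if j = i then p.1 else 0) := fun j => rfl
        rw [Finset.prod_cons, Finset.prod_cons]
        have hfi : ((addRightEmbedding fun t => if t = i then p.1 else 0) g) i = p.1 := by
          rw [happ, hgi, if_pos rfl, zero_add]
        have hfj : ∀ j ∈ s, ((addRightEmbedding fun t => if t = i then p.1 else 0) g) j = g j := by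
          intro j hj
          rw [happ, if_neg (by rintro rfl; exact hi hj), add_zero]
        have h1 : (∏ j ∈ s, α j ^ ((addRightEmbedding fun t => if t = i then p.1 else 0) g j)
              / (Nat.factorial ((addRightEmbedding fun t => if t = i then p.1 else 0) g j) : ℝ))
            = ∏ j ∈ s, α j ^ g j / (Nat.factorial (g j) : ℝ) :=
          Finset.prod_congr rfl fun j hj => by rw [hfj j hj]
        have h2 : (∏ j ∈ s, hermiteP ((addRightEmbedding fun t => if t = i then p.1 else 0) g j) (x j))
            = ∏ j ∈ s, hermiteP (g j) (x j) :=
          Finset.prod_congr rfl fun j hj => by rw [hfj j hj]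
        rw [hfi, h1, h2]
        ring
      rw [Finset.sum_congr rfl hterm, ← Finset.mul_sum, ih]
    rw [Finset.sum_congr rfl hinner]
    rw [biv (α i) (Real.sqrt (∑ j ∈ s, α j ^ 2)) (x i)
      ((∑ j ∈ s, α j * x j) / Real.sqrt (∑ j ∈ s, α j ^ 2)) n]
    have hsq : (Real.sqrt (∑ j ∈ s, α j ^ 2)) ^ 2 = ∑ j ∈ s, α j ^ 2 :=
      Real.sq_sqrt (by positivity)
    have hmul : Real.sqrt (∑ j ∈ s, α j ^ 2) *
        ((∑ j ∈ s, α j * x j) / Real.sqrt (∑ j ∈ s, α j ^ 2)) = ∑ j ∈ s, α j * x j := by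
      rcases eq_or_ne (Real.sqrt (∑ j ∈ s, α j ^ 2)) 0 with h | h
      · have h0 : ∑ j ∈ s, α j ^ 2 ≤ 0 := Real.sqrt_eq_zero'.mp h
        have hz : ∀ j ∈ s, α j = 0 := by
          intro j hj
          have hnn : ∀ k ∈ s, (0:ℝ) ≤ α k ^ 2 := fun k _ => sq_nonneg _
          have := Finset.sum_nonneg hnn
          have heq : ∑ k ∈ s, α k ^ 2 = 0 := le_antisymm h0 this
          have := (Finset.sum_eq_zero_iff_of_nonneg hnn).mp heq j hj
          exact pow_eq_zero_iff (by norm_num) |>.mp this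
        rw [h, zero_mul]
        exact (Finset.sum_eq_zero fun j hj => by rw [hz j hj, zero_mul]).symm
      · field_simp
    rw [Finset.sum_cons, Finset.sum_cons, hsq, hmul]

theorem hermite_addition_theorem (m : ℕ) (hm : 1 ≤ m) (α x : Fin m → ℝ)
    (hα : α ≠ 0) (n : ℕ) :
    ∑ f ∈ Finset.Nat.antidiagonalTuple m n,
        (∏ i, α i ^ f i / (Nat.factorial (f i) : ℝ)) * ∏ i, hermiteP (f i) (x i)
      = (Real.sqrt (∑ i, α i ^ 2)) ^ n / (Nat.factorial n : ℝ) *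
          hermiteP n ((∑ i, α i * x i) / Real.sqrt (∑ i, α i ^ 2)) := by
  have h := multi (Finset.univ : Finset (Fin m)) α x n
  rwa [Finset.piAntidiag_univ_fin_eq_antidiagonalTuple] at h
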